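/- Given parameters (T, Λ, ν, Θ, κ, Φ) of a one-factor ordinal CFA with K ≥ 3 categories and loadings λ_j ≠ 0 with Σ_j λ_j ≠ 0 and τ_{j(K−1)} > τ_{j1} for all j, define δ_jj = (τ_{j(K−1)} − τ_{j1})/(K − 2), D = p(Σ_j δ_jj^{-1} λ_j)^{-1}, γ_j = 1.5 − δ_jj^{-1} τ_{j1}, and β = −(Σ_j δ_jj^{-1} λ_j)^{-1} Σ_j (1.5 + δ_jj^{-1}(ν_j − τ_{j1})). Then the transformed parameters τ̃_{jk} = γ_j + δ_jj^{-1} τ_{jk}, λ̃_j = δ_jj^{-1} λ_j D, ν̃_j = δ_jj^{-1}(ν_j + λ_j β) + γ_j satisfy: τ̃_{j1} = 1.5 and τ̃_{j(K−1)} = K − 0.5 for all j, (1/p)Σ_j λ̃_j = 1, and Σ_j ν̃_j = 0. -/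

import Mathlib

open scoped BigOperators

/-- The explicit Wu–Estabrook transformation mapping traditionally-identified
one-factor ordinal CFA parameters to integer-constrained parameters:
with δ_jj = (τ_{j(K−1)} − τ_{j1})/(K − 2), D = p (Σ δ_jj⁻¹ λ_j)⁻¹,
γ_j = 1.5 − δ_jj⁻¹ τ_{j1}, β = −(Σ δ_jj⁻¹ λ_j)⁻¹ Σ (1.5 + δ_jj⁻¹(ν_j − τ_{j1})),
the transformed parameters satisfy the integer constraints:
τ̃_{j1} = 1.5, τ̃_{j(K−1)} = K − 0.5, (1/p) Σ λ̃_j = 1, Σ ν̃_j = 0. -/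
theorem explicit_transformation_satisfies_integer_constraints
    (p K : ℕ) (hp : 0 < p) (hK : 3 ≤ K)
    (lam ν τ1 τK1 : Fin p → ℝ)
    (hτ : ∀ j, τ1 j < τK1 j)
    (hlam : ∀ j, lam j ≠ 0)
    (hlsum : ∑ j, lam j ≠ 0)
    (hs : ∑ j, ((τK1 j - τ1 j) / ((K : ℝ) - 2))⁻¹ * lam j ≠ 0) :
    (∀ j, (1.5 - ((τK1 j - τ1 j) / ((K : ℝ) - 2))⁻¹ * τ1 j) +
        ((τK1 j - τ1 j) / ((K : ℝ) - 2))⁻¹ * τ1 j = 1.5) ∧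
    (∀ j, (1.5 - ((τK1 j - τ1 j) / ((K : ℝ) - 2))⁻¹ * τ1 j) +
        ((τK1 j - τ1 j) / ((K : ℝ) - 2))⁻¹ * τK1 j = (K : ℝ) - 0.5) ∧
    ((1 / (p : ℝ)) * ∑ j, ((τK1 j - τ1 j) / ((K : ℝ) - 2))⁻¹ * lam j *
        ((p : ℝ) * (∑ i, ((τK1 i - τ1 i) / ((K : ℝ) - 2))⁻¹ * lam i)⁻¹) = 1) ∧
    (∑ j, (((τK1 j - τ1 j) / ((K : ℝ) - 2))⁻¹ *
        (ν j + lam j * (-(∑ i, ((τK1 i - τ1 i) / ((K : ℝ) - 2))⁻¹ * lam i)⁻¹ *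
          ∑ i, (1.5 + ((τK1 i - τ1 i) / ((K : ℝ) - 2))⁻¹ * (ν i - τ1 i)))) +
        (1.5 - ((τK1 j - τ1 j) / ((K : ℝ) - 2))⁻¹ * τ1 j)) = 0) := by
  have hK2 : (0:ℝ) < (K : ℝ) - 2 := by
    have : (3:ℝ) ≤ (K:ℝ) := by exact_mod_cast hK
    linarith
  have hd : ∀ j, (τK1 j - τ1 j) / ((K : ℝ) - 2) ≠ 0 := fun j =>
    div_ne_zero (sub_ne_zero.mpr (ne_of_gt (hτ j))) (ne_of_gt hK2)
  have hpR : (p:ℝ) ≠ 0 := Nat.cast_ne_zero.mpr hp.ne'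
  refine ⟨fun j => by ring, fun j => ?_, ?_, ?_⟩
  · have key : (((τK1 j - τ1 j) / ((K:ℝ)-2))⁻¹) * (τK1 j - τ1 j) = (K:ℝ)-2 := by
      rw [inv_div]
      exact div_mul_cancel₀ _ (sub_ne_zero.mpr (hτ j).ne')
    rw [mul_sub] at key
    linarith
  · rw [← Finset.sum_mul]
    field_simp
    exact div_self (by simp only [inv_div, div_mul_eq_mul_div] at hs; exact hs)
  · set S := ∑ i, ((τK1 i - τ1 i) / ((K : ℝ) - 2))⁻¹ * lam i with hS
    set B := ∑ i, (1.5 + ((τK1 i - τ1 i) / ((K : ℝ) - 2))⁻¹ * (ν i - τ1 i)) with hB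
    have expand : ∀ j : Fin p,
        (((τK1 j - τ1 j) / ((K : ℝ) - 2))⁻¹ *
          (ν j + lam j * (-S⁻¹ * B)) +
          (1.5 - ((τK1 j - τ1 j) / ((K : ℝ) - 2))⁻¹ * τ1 j))
        = (1.5 + ((τK1 j - τ1 j) / ((K : ℝ) - 2))⁻¹ * (ν j - τ1 j))
          + (((τK1 j - τ1 j) / ((K : ℝ) - 2))⁻¹ * lam j) * (-S⁻¹ * B) := by
      intro j; ring
    rw [Finset.sum_congr rfl (fun j _ => expand j), Finset.sum_add_distrib,
      ← Finset.sum_mul, ← hS, ← hB]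
    field_simp
    ring
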